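/- Let 𝔠 > 0 and let P, Q, P′, Q′ ∈ ℝ⁴ be four-vectors with positive time components satisfying P·P = Q·Q = P′·P′ = Q′·Q′ = 𝔠² and P + Q = P′ + Q′. Then there exist a Lorentz transformation Λ and a unit vector ω ∈ 𝕊² ⊂ ℝ³ such that Λ(P+Q) = (√s,0,0,0)ᵀ, Λ(P−Q) = (0,p̄)ᵀ for some p̄ ∈ ℝ³ with |p̄| = 2g, and P′ = ½ Λ⁻¹ (√s, 2gω)ᵀ, Q′ = ½ Λ⁻¹ (√s, −2gω)ᵀ, where s := 2(P·Q + 𝔠²) and g := √((P·Q − 𝔠²)/2). -/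

import Mathlib

open Matrix

/-- The Minkowski matrix D = diag(1, -1, -1, -1). -/
noncomputable def minkD : Matrix (Fin 4) (Fin 4) ℝ := Matrix.diagonal ![1, -1, -1, -1]

/-- A real 4×4 matrix Λ is a Lorentz transformation if ΛᵀDΛ = D. -/
def IsLorentz (Λ : Matrix (Fin 4) (Fin 4) ℝ) : Prop := Λᵀ * minkD * Λ = minkD

/-- The Lorentz inner product P·Q = p₀q₀ − p₁q₁ − p₂q₂ − p₃q₃. -/
def lDot (P Q : Fin 4 → ℝ) : ℝ := P 0 * Q 0 - P 1 * Q 1 - P 2 * Q 2 - P 3 * Q 3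

/-- The Euclidean norm on ℝ³. -/
noncomputable def norm3 (p : Fin 3 → ℝ) : ℝ := Real.sqrt (p 0 ^ 2 + p 1 ^ 2 + p 2 ^ 2)

def Mmat (a k1 k2 k3 m : ℝ) : Matrix (Fin 4) (Fin 4) ℝ :=
  !![a*(a+m), -(k1*(a+m)), -(k2*(a+m)), -(k3*(a+m));
     -(k1*(a+m)), m*(a+m)+k1*k1, k1*k2, k1*k3;
     -(k2*(a+m)), k2*k1, m*(a+m)+k2*k2, k2*k3;
     -(k3*(a+m)), k3*k1, k3*k2, m*(a+m)+k3*k3]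

noncomputable def boost (a k1 k2 k3 m : ℝ) : Matrix (Fin 4) (Fin 4) ℝ :=
  (1/(m*(a+m))) • Mmat a k1 k2 k3 m

lemma minkD_eq : minkD = !![1,0,0,0; 0,-1,0,0; 0,0,-1,0; 0,0,0,-1] := by
  ext i j
  fin_cases i <;> fin_cases j <;> simp [minkD, Matrix.diagonal, Matrix.vecHead, Matrix.vecTail]

lemma Mmat_symm (a k1 k2 k3 m : ℝ) : (Mmat a k1 k2 k3 m)ᵀ = Mmat a k1 k2 k3 m := by
  ext i j
  fin_cases i <;> fin_cases j <;> simp [Mmat] <;> ring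

set_option maxHeartbeats 4000000 in
lemma Mmat_key (a k1 k2 k3 m : ℝ) (ha : a^2 = m^2 + (k1^2+k2^2+k3^2)) :
    (Mmat a k1 k2 k3 m)ᵀ * minkD * (Mmat a k1 k2 k3 m) = ((m*(a+m))^2) • minkD := by
  rw [Mmat_symm]
  ext i j
  fin_cases i <;> fin_cases j <;>
    simp [Mmat, minkD_eq, Matrix.mul_apply, Fin.sum_univ_four, Matrix.vecHead, Matrix.vecTail] <;>
    first
      | ring1
      | linear_combination ((a+m)^2) * ha
      | linear_combination (-(k1*(a+m))) * ha
      | linear_combination (-(k2*(a+m))) * ha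
      | linear_combination (-(k3*(a+m))) * ha
      | linear_combination (k1^2) * ha
      | linear_combination (k2^2) * ha
      | linear_combination (k3^2) * ha
      | linear_combination (k1*k2) * ha
      | linear_combination (k1*k3) * ha
      | linear_combination (k2*k3) * ha

lemma boost_lorentz (a k1 k2 k3 m : ℝ) (hm : m ≠ 0) (hma : a + m ≠ 0)
    (ha : a^2 = m^2 + (k1^2+k2^2+k3^2)) : IsLorentz (boost a k1 k2 k3 m) := by
  unfold IsLorentz boost
  rw [Matrix.transpose_smul, Matrix.smul_mul, Matrix.smul_mul, Matrix.mul_smul,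
    Mmat_key a k1 k2 k3 m ha, smul_smul, smul_smul]
  have h1 : 1/(m*(a+m)) * (1/(m*(a+m))) * (m*(a+m))^2 = 1 := by field_simp
  rw [h1, one_smul]

set_option maxHeartbeats 1000000 in
lemma Mmat_mulVec_self (a k1 k2 k3 m : ℝ)
    (ha : a^2 = m^2 + (k1^2+k2^2+k3^2)) :
    (Mmat a k1 k2 k3 m).mulVec ![a,k1,k2,k3] = (m*(a+m)) • ![m,0,0,0] := by
  funext i
  fin_cases i <;>
    simp [Mmat, Matrix.mulVec, dotProduct, Fin.sum_univ_four] <;>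
    first
      | ring1
      | linear_combination (a+m) * ha
      | linear_combination (-(a+m)) * ha
      | linear_combination k1 * ha
      | linear_combination (-k1) * ha
      | linear_combination k2 * ha
      | linear_combination (-k2) * ha
      | linear_combination k3 * ha
      | linear_combination (-k3) * ha

lemma boost_mulVec_self (a k1 k2 k3 m : ℝ) (hm : m ≠ 0) (hma : a + m ≠ 0)
    (ha : a^2 = m^2 + (k1^2+k2^2+k3^2)) :
    (boost a k1 k2 k3 m).mulVec ![a,k1,k2,k3] = ![m,0,0,0] := by
  unfold boost
  rw [Matrix.smul_mulVec, Mmat_mulVec_self a k1 k2 k3 m ha, smul_smul]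
  have h1 : 1/(m*(a+m)) * (m*(a+m)) = 1 := by field_simp
  rw [h1, one_smul]

lemma Mmat_mulVec_zero (a k1 k2 k3 m : ℝ) (V : Fin 4 → ℝ) :
    (Mmat a k1 k2 k3 m).mulVec V 0 = (a+m) * (a * V 0 - k1 * V 1 - k2 * V 2 - k3 * V 3) := by
  simp [Mmat, Matrix.mulVec, dotProduct, Fin.sum_univ_four, Matrix.vecHead, Matrix.vecTail]
  ring

lemma boost_mulVec_zero (a k1 k2 k3 m : ℝ)
    (V : Fin 4 → ℝ) (hV : a * V 0 - k1 * V 1 - k2 * V 2 - k3 * V 3 = 0) :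
    (boost a k1 k2 k3 m).mulVec V 0 = 0 := by
  unfold boost
  rw [Matrix.smul_mulVec, Pi.smul_apply, Mmat_mulVec_zero, hV, mul_zero, smul_zero]

lemma lDot_dot (x y : Fin 4 → ℝ) : lDot x y = x ⬝ᵥ minkD.mulVec y := by
  simp [lDot, dotProduct, Matrix.mulVec, minkD_eq, Fin.sum_univ_four,
    Matrix.vecHead, Matrix.vecTail]
  ring

lemma lDot_dot' (x y : Fin 4 → ℝ) : lDot x y = Matrix.vecMul x minkD ⬝ᵥ y := by
  simp [lDot, dotProduct, Matrix.vecMul, minkD_eq, Fin.sum_univ_four,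
    Matrix.vecHead, Matrix.vecTail]
  ring

lemma lorentz_lDot {Λ : Matrix (Fin 4) (Fin 4) ℝ} (h : IsLorentz Λ) (v w : Fin 4 → ℝ) :
    lDot (Λ.mulVec v) (Λ.mulVec w) = lDot v w := by
  rw [lDot_dot, lDot_dot' v w]
  calc Λ.mulVec v ⬝ᵥ minkD.mulVec (Λ.mulVec w)
      = Λ.mulVec v ⬝ᵥ (minkD * Λ).mulVec w := by rw [Matrix.mulVec_mulVec]
    _ = Matrix.vecMul (Λ.mulVec v) (minkD * Λ) ⬝ᵥ w := by rw [Matrix.dotProduct_mulVec]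
    _ = Matrix.vecMul (Matrix.vecMul v Λᵀ) (minkD * Λ) ⬝ᵥ w := by rw [Matrix.vecMul_transpose]
    _ = Matrix.vecMul v (Λᵀ * (minkD * Λ)) ⬝ᵥ w := by rw [Matrix.vecMul_vecMul]
    _ = Matrix.vecMul v minkD ⬝ᵥ w := by rw [← Matrix.mul_assoc, h]

lemma lorentz_isUnit_det {Λ : Matrix (Fin 4) (Fin 4) ℝ} (h : IsLorentz Λ) : IsUnit Λ.det := by
  have h2 := congrArg Matrix.det h
  rw [Matrix.det_mul, Matrix.det_mul, Matrix.det_transpose] at h2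
  have hD : minkD.det = -1 := by
    simp [minkD, Matrix.det_diagonal, Fin.prod_univ_four, Matrix.vecHead, Matrix.vecTail]
  rw [hD] at h2
  refine isUnit_iff_ne_zero.mpr fun h0 => ?_
  rw [h0] at h2
  norm_num at h2

lemma lorentz_inv_mulVec {Λ : Matrix (Fin 4) (Fin 4) ℝ} (h : IsLorentz Λ) (v : Fin 4 → ℝ) :
    Λ⁻¹.mulVec (Λ.mulVec v) = v := by
  rw [Matrix.mulVec_mulVec, Matrix.nonsing_inv_mul _ (lorentz_isUnit_det h), Matrix.one_mulVec]

set_option maxHeartbeats 2000000 in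
lemma lDot_ge_csq (c : ℝ) (hc : 0 ≤ c) (P Q : Fin 4 → ℝ) (hP0 : 0 < P 0) (hQ0 : 0 < Q 0)
    (hP : lDot P P = c ^ 2) (hQ : lDot Q Q = c ^ 2) : c ^ 2 ≤ lDot P Q := by
  simp only [lDot] at hP hQ ⊢
  have h1 : c ≤ P 0 := by nlinarith [sq_nonneg (P 1), sq_nonneg (P 2), sq_nonneg (P 3)]
  have h2 : c ≤ Q 0 := by nlinarith [sq_nonneg (Q 1), sq_nonneg (Q 2), sq_nonneg (Q 3)]
  have hB : 0 ≤ P 0 * Q 0 - c ^ 2 := by nlinarith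
  have hCS : (P 1*Q 1 + P 2*Q 2 + P 3*Q 3)^2
      ≤ (P 1^2+P 2^2+P 3^2)*(Q 1^2+Q 2^2+Q 3^2) := by
    nlinarith [sq_nonneg (P 1*Q 2 - P 2*Q 1), sq_nonneg (P 1*Q 3 - P 3*Q 1),
      sq_nonneg (P 2*Q 3 - P 3*Q 2), sq_nonneg (P 1*Q 1 + P 2*Q 2 + P 3*Q 3)]
  have e1 : P 1^2+P 2^2+P 3^2 = P 0^2 - c^2 := by nlinarith
  have e2 : Q 1^2+Q 2^2+Q 3^2 = Q 0^2 - c^2 := by nlinarith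
  rw [e1, e2] at hCS
  have hE : (P 0^2 - c^2)*(Q 0^2 - c^2) ≤ (P 0*Q 0 - c^2)^2 := by
    nlinarith [mul_nonneg (sq_nonneg c) (sq_nonneg (P 0 - Q 0))]
  nlinarith [hCS, hE, hB]

lemma norm3_eq (h y1 y2 y3 : ℝ) (hh : 0 ≤ h) (hy : y1^2+y2^2+y3^2 = 2*h) :
    norm3 ![y1,y2,y3] = 2 * Real.sqrt (h/2) := by
  have h1 : norm3 ![y1,y2,y3] = Real.sqrt (2*h) := by
    simp only [norm3, Matrix.cons_val_zero, Matrix.cons_val_one, Matrix.head_cons]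
    rw [show ![y1,y2,y3] 2 = y3 from rfl, hy]
  rw [h1, show 2*h = 2^2*(h/2) by ring, Real.sqrt_mul (by positivity),
    Real.sqrt_sq (by norm_num)]


set_option maxHeartbeats 2000000 in
/-- For four-vectors P,Q,P′,Q′ on the mass shell with P+Q = P′+Q′, there exist a Lorentz
transformation Λ and a unit vector ω ∈ 𝕊² such that Λ(P+Q) = (√s,0,0,0)ᵀ,
Λ(P−Q) = (0,p̄)ᵀ with |p̄| = 2g, and P′ = ½Λ⁻¹(√s, 2gω)ᵀ, Q′ = ½Λ⁻¹(√s, −2gω)ᵀ. -/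
theorem lorentz_post_collision (c : ℝ) (hc : 0 < c) (P Q P' Q' : Fin 4 → ℝ)
    (hP0 : 0 < P 0) (hQ0 : 0 < Q 0) (hP'0 : 0 < P' 0) (hQ'0 : 0 < Q' 0)
    (hP : lDot P P = c ^ 2) (hQ : lDot Q Q = c ^ 2)
    (hP' : lDot P' P' = c ^ 2) (hQ' : lDot Q' Q' = c ^ 2)
    (hcons : P + Q = P' + Q') :
    ∃ (Λ : Matrix (Fin 4) (Fin 4) ℝ) (ω pbar : Fin 3 → ℝ),
      IsLorentz Λ ∧ norm3 ω = 1 ∧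
      Λ.mulVec (P + Q) = ![Real.sqrt (2 * (lDot P Q + c ^ 2)), 0, 0, 0] ∧
      Λ.mulVec (P - Q) = Fin.cons 0 pbar ∧
      norm3 pbar = 2 * Real.sqrt ((lDot P Q - c ^ 2) / 2) ∧
      P' = (1 / 2 : ℝ) • Λ⁻¹.mulVec
        (Fin.cons (Real.sqrt (2 * (lDot P Q + c ^ 2)))
          ((2 * Real.sqrt ((lDot P Q - c ^ 2) / 2)) • ω)) ∧
      Q' = (1 / 2 : ℝ) • Λ⁻¹.mulVec
        (Fin.cons (Real.sqrt (2 * (lDot P Q + c ^ 2)))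
          ((-(2 * Real.sqrt ((lDot P Q - c ^ 2) / 2))) • ω)) := by
  have hPe := hP; have hQe := hQ; have hP'e := hP'; have hQ'e := hQ'
  simp only [lDot] at hPe hQe hP'e hQ'e
  have hc0 := congrFun hcons 0
  have hc1 := congrFun hcons 1
  have hc2 := congrFun hcons 2
  have hc3 := congrFun hcons 3
  simp only [Pi.add_apply] at hc0 hc1 hc2 hc3
  have hge := lDot_ge_csq c hc.le P Q hP0 hQ0 hP hQ
  have hh : 0 ≤ lDot P Q - c ^ 2 := by linarith
  have hs0 : 0 < 2 * (lDot P Q + c ^ 2) := by linarith [hge, pow_pos hc 2]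
  set m := Real.sqrt (2 * (lDot P Q + c ^ 2)) with hmdef
  have hm2 : m ^ 2 = 2 * (lDot P Q + c ^ 2) := Real.sq_sqrt hs0.le
  have hm0 : 0 < m := Real.sqrt_pos.mpr hs0
  set g2 := 2 * Real.sqrt ((lDot P Q - c ^ 2) / 2) with hg2def
  have hg2sq : g2 ^ 2 = 2 * (lDot P Q - c ^ 2) := by
    rw [hg2def, mul_pow, Real.sq_sqrt (show (0:ℝ) ≤ (lDot P Q - c ^ 2) / 2 by linarith)]
    ring
  have ham : 0 < P 0 + Q 0 + m := by linarith
  have ha : (P 0 + Q 0) ^ 2 = m ^ 2 + ((P 1 + Q 1) ^ 2 + (P 2 + Q 2) ^ 2 + (P 3 + Q 3) ^ 2) := by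
    rw [hm2]
    simp only [lDot]
    linear_combination hPe + hQe
  set Λ := boost (P 0 + Q 0) (P 1 + Q 1) (P 2 + Q 2) (P 3 + Q 3) m with hLdef
  have hL : IsLorentz Λ := boost_lorentz _ _ _ _ _ (ne_of_gt hm0) (ne_of_gt ham) ha
  have hKeta : P + Q = ![P 0 + Q 0, P 1 + Q 1, P 2 + Q 2, P 3 + Q 3] := by
    funext i; fin_cases i <;> simp
  have hLK : Λ.mulVec (P + Q) = ![m, 0, 0, 0] := by
    rw [hKeta, hLdef]
    exact boost_mulVec_self _ _ _ _ _ (ne_of_gt hm0) (ne_of_gt ham) ha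
  have hw0 : Λ.mulVec (P - Q) 0 = 0 := by
    rw [hLdef]
    apply boost_mulVec_zero
    simp only [Pi.sub_apply]
    linear_combination hPe - hQe
  set w := Λ.mulVec (P - Q) with hwdef
  have hwsum : w 1 ^ 2 + w 2 ^ 2 + w 3 ^ 2 = 2 * (lDot P Q - c ^ 2) := by
    have h1 := lorentz_lDot hL (P - Q) (P - Q)
    rw [← hwdef] at h1
    simp only [lDot, Pi.sub_apply] at h1
    rw [hw0] at h1
    simp only [lDot]
    linear_combination (-1) * h1 - hPe - hQe
  have hwP : Λ.mulVec (P - Q) = ![(0:ℝ), w 1, w 2, w 3] := by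
    funext i
    fin_cases i
    · exact hw0
    · rfl
    · rfl
    · rfl
  have hu0 : Λ.mulVec (P' - Q') 0 = 0 := by
    rw [hLdef]
    apply boost_mulVec_zero
    simp only [Pi.sub_apply]
    linear_combination hP'e - hQ'e + (P' 0 - Q' 0) * hc0 - (P' 1 - Q' 1) * hc1
      - (P' 2 - Q' 2) * hc2 - (P' 3 - Q' 3) * hc3
  set u := Λ.mulVec (P' - Q') with hudef
  have hpqe : P' 0 * Q' 0 - P' 1 * Q' 1 - P' 2 * Q' 2 - P' 3 * Q' 3 = lDot P Q := by
    simp only [lDot]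
    linear_combination (hPe + hQe - hP'e - hQ'e) / 2
      - ((P 0 + Q 0 + P' 0 + Q' 0) / 2) * hc0
      + ((P 1 + Q 1 + P' 1 + Q' 1) / 2) * hc1
      + ((P 2 + Q 2 + P' 2 + Q' 2) / 2) * hc2
      + ((P 3 + Q 3 + P' 3 + Q' 3) / 2) * hc3
  have husum : u 1 ^ 2 + u 2 ^ 2 + u 3 ^ 2 = 2 * (lDot P Q - c ^ 2) := by
    have h1 := lorentz_lDot hL (P' - Q') (P' - Q')
    rw [← hudef] at h1
    simp only [lDot, Pi.sub_apply] at h1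
    rw [hu0] at h1
    linear_combination (-1) * h1 - hP'e - hQ'e + 2 * hpqe
  have huP : Λ.mulVec (P' - Q') = ![(0:ℝ), u 1, u 2, u 3] := by
    funext i
    fin_cases i
    · exact hu0
    · rfl
    · rfl
    · rfl
  obtain ⟨ω, hω1, hgω⟩ : ∃ ω : Fin 3 → ℝ, norm3 ω = 1 ∧ g2 • ω = ![u 1, u 2, u 3] := by
    rcases eq_or_lt_of_le hh with h0 | hpos
    · have hg20 : g2 = 0 := by
        rw [hg2def, ← h0]
        norm_num
      have hz : u 1 ^ 2 + u 2 ^ 2 + u 3 ^ 2 = 0 := by rw [husum, ← h0]; ring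
      have hu1 : u 1 = 0 := by
        have h1 : u 1 ^ 2 = 0 := by linarith [sq_nonneg (u 1), sq_nonneg (u 2), sq_nonneg (u 3)]
        exact (pow_eq_zero_iff two_ne_zero).mp h1
      have hu2 : u 2 = 0 := by
        have h1 : u 2 ^ 2 = 0 := by linarith [sq_nonneg (u 1), sq_nonneg (u 2), sq_nonneg (u 3)]
        exact (pow_eq_zero_iff two_ne_zero).mp h1
      have hu3 : u 3 = 0 := by
        have h1 : u 3 ^ 2 = 0 := by linarith [sq_nonneg (u 1), sq_nonneg (u 2), sq_nonneg (u 3)]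
        exact (pow_eq_zero_iff two_ne_zero).mp h1
      refine ⟨![1, 0, 0], by norm_num [norm3]; rfl, ?_⟩
      funext i
      fin_cases i <;> simp [hg20, hu1, hu2, hu3]
    · have hg2pos : 0 < g2 := by
        have h1 : 0 < Real.sqrt ((lDot P Q - c ^ 2) / 2) :=
          Real.sqrt_pos.mpr (by linarith)
        rw [hg2def]; linarith
      have hg2ne : g2 ≠ 0 := ne_of_gt hg2pos
      refine ⟨![u 1 / g2, u 2 / g2, u 3 / g2], ?_, ?_⟩
      · have h2 : (u 1 / g2) ^ 2 + (u 2 / g2) ^ 2 + (u 3 / g2) ^ 2 = 1 := by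
          field_simp
          linear_combination husum - hg2sq
        simp only [norm3]
        rw [show (![u 1 / g2, u 2 / g2, u 3 / g2] : Fin 3 → ℝ) 0 = u 1 / g2 from rfl,
          show (![u 1 / g2, u 2 / g2, u 3 / g2] : Fin 3 → ℝ) 1 = u 2 / g2 from rfl,
          show (![u 1 / g2, u 2 / g2, u 3 / g2] : Fin 3 → ℝ) 2 = u 3 / g2 from rfl, h2]
        exact Real.sqrt_one
      · funext i
        fin_cases i <;> simp [smul_eq_mul] <;> field_simp
  have hinv := lorentz_inv_mulVec hL
  have hnp : norm3 ![w 1, w 2, w 3] = g2 := by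
    rw [hg2def]
    exact norm3_eq _ _ _ _ hh hwsum
  refine ⟨Λ, ω, ![w 1, w 2, w 3], hL, hω1, hLK, ?_, ?_, ?_, ?_⟩
  · exact hwP
  · exact hnp
  · have key : Fin.cons m (g2 • ω) = Λ.mulVec ((P + Q) + (P' - Q')) := by
      rw [Matrix.mulVec_add, hLK, huP, hgω]
      have e1 : Fin.cons m ![u 1, u 2, u 3] = ![m, u 1, u 2, u 3] := rfl
      rw [e1]
      funext i
      fin_cases i <;> simp
    rw [key, hinv, hcons]
    funext i
    simp only [Pi.smul_apply, Pi.add_apply, Pi.sub_apply, smul_eq_mul]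
    ring
  · have key : Fin.cons m ((-g2) • ω) = Λ.mulVec ((P + Q) - (P' - Q')) := by
      rw [Matrix.mulVec_sub, hLK, huP, neg_smul, hgω]
      funext i
      refine Fin.cases ?_ (fun j => ?_) i
      · simp
      · simp only [Fin.cons_succ, Pi.sub_apply, Pi.neg_apply]
        fin_cases j <;> simp
    rw [key, hinv, hcons]
    funext i
    simp only [Pi.smul_apply, Pi.add_apply, Pi.sub_apply, smul_eq_mul]
    ring
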